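/- Let w be a right-infinite word over a finite alphabet, let A_w be its factor algebra over ℚ, let V_n be the span of the images of length-n factors of w in A_w, and let W_n ⊆ V_n be the span of all elements ab − ba where a, b are factors of w with |a| + |b| = n. Then L_w(n) = dim(V_n) − dim(W_n). -/

import Mathlib

variable {α : Type*}

/-- `u` occurs in the infinite word `w` at position `i`. -/
def FactorAt (w : ℕ → α) (i : ℕ) (u : List α) : Prop :=
  u = (List.range u.length).map fun k => w (i + k)

/-- The set of (finite) factors of the right-infinite word `w`. -/
def Fac (w : ℕ → α) : Set (List α) := {u | ∃ i, FactorAt w i u}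

/-- The Lie complexity: the number of rotation classes of length-`n` words all of
whose members are factors of `w`. -/
noncomputable def LieComplexity (w : ℕ → α) (n : ℕ) : ℕ :=
  Set.ncard {q : Quotient (List.IsRotated.setoid α) |
    ∃ u : List α, Quotient.mk _ u = q ∧ u.length = n ∧ ∀ v, u.IsRotated v → v ∈ Fac w}

/-- The relation defining the factor algebra: words that are not factors of `w`
are set to zero in the monoid algebra `ℚ⟨Σ*⟩`. -/
def FacAlgRel (w : ℕ → α) :
    MonoidAlgebra ℚ (FreeMonoid α) → MonoidAlgebra ℚ (FreeMonoid α) → Prop :=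
  fun x y => ∃ u : FreeMonoid α, FreeMonoid.toList u ∉ Fac w ∧
    x = MonoidAlgebra.of ℚ (FreeMonoid α) u ∧ y = 0

/-- The factor algebra `A_w` of `w` over `ℚ`. -/
abbrev FacAlg (w : ℕ → α) := RingQuot (FacAlgRel w)

/-- The image in the factor algebra of a word `u`. -/
noncomputable def facCls (w : ℕ → α) (u : List α) : FacAlg w :=
  RingQuot.mkAlgHom ℚ (FacAlgRel w) (MonoidAlgebra.of ℚ (FreeMonoid α) (FreeMonoid.ofList u))

/-- `V_n`: the span of the images of length-`n` factors of `w`. -/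
noncomputable def Vspace (w : ℕ → α) (n : ℕ) : Submodule ℚ (FacAlg w) :=
  Submodule.span ℚ {x | ∃ u ∈ Fac w, u.length = n ∧ x = facCls w u}

/-- `W_n`: the span of commutators `ab - ba` with `a, b` factors of `w` and `|a|+|b| = n`. -/
noncomputable def Wspace (w : ℕ → α) (n : ℕ) : Submodule ℚ (FacAlg w) :=
  Submodule.span ℚ {x | ∃ a ∈ Fac w, ∃ b ∈ Fac w, a.length + b.length = n ∧
    x = facCls w a * facCls w b - facCls w b * facCls w a}

theorem fac_infix {w : ℕ → α} {u v : List α} (huv : u <:+: v) (hv : v ∈ Fac w) : u ∈ Fac w := by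
  obtain ⟨i, hi⟩ := hv
  obtain ⟨s, t, hst⟩ := huv
  refine ⟨i + s.length, ?_⟩
  have hvk : ∀ k (hk : k < v.length), v[k] = w (i + k) := by
    intro k hk
    rw [List.getElem_of_eq hi hk]
    simp
  have hlen : s.length + u.length ≤ v.length := by
    rw [← hst]; simp
  apply List.ext_getElem (by simp)
  intro k hk1 hk2
  have hk3 : s.length + k < v.length := by omega
  have h2 : v[s.length + k] = u[k] := by
    rw [List.getElem_of_eq hst.symm hk3]
    rw [List.getElem_append_left (by simp; omega)]
    rw [List.getElem_append_right (by omega)]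
    congr 1; omega
  rw [List.getElem_map, List.getElem_range, ← h2, hvk _ hk3, Nat.add_assoc]

theorem nil_fac (w : ℕ → α) : [] ∈ Fac w := ⟨0, by simp [FactorAt]⟩

section Alg
variable {w : ℕ → α}

noncomputable def facIdeal (w : ℕ → α) : Submodule ℚ (MonoidAlgebra ℚ (FreeMonoid α)) :=
  Submodule.span ℚ {x | ∃ u : FreeMonoid α, FreeMonoid.toList u ∉ Fac w ∧
    x = MonoidAlgebra.of ℚ (FreeMonoid α) u}

lemma notFac_mul_right {u v : FreeMonoid α} (hu : FreeMonoid.toList u ∉ Fac w) :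
    FreeMonoid.toList (u * v) ∉ Fac w := by
  intro h
  exact hu (fac_infix ⟨[], FreeMonoid.toList v, by simp⟩ h)

lemma notFac_mul_left {u v : FreeMonoid α} (hu : FreeMonoid.toList v ∉ Fac w) :
    FreeMonoid.toList (u * v) ∉ Fac w := by
  intro h
  exact hu (fac_infix ⟨FreeMonoid.toList u, [], by simp⟩ h)

lemma single_mul_mem (u : FreeMonoid α) (hu : FreeMonoid.toList u ∉ Fac w)
    (c : MonoidAlgebra ℚ (FreeMonoid α)) :
    (MonoidAlgebra.single u (1:ℚ)) * c ∈ facIdeal w := by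
  induction c using MonoidAlgebra.induction_linear with
  | zero => simp
  | add f g hf hg => rw [mul_add]; exact add_mem hf hg
  | single v r =>
    rw [MonoidAlgebra.single_mul_single, one_mul]
    have : MonoidAlgebra.single (u * v) r =
        r • MonoidAlgebra.of ℚ (FreeMonoid α) (u * v) := by
      simp [MonoidAlgebra.of_apply, MonoidAlgebra.smul_single']
    rw [this]
    exact Submodule.smul_mem _ _ (Submodule.subset_span (by exact ⟨u * v, notFac_mul_right hu, rfl⟩))

lemma mul_single_mem (u : FreeMonoid α) (hu : FreeMonoid.toList u ∉ Fac w)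
    (c : MonoidAlgebra ℚ (FreeMonoid α)) :
    c * (MonoidAlgebra.single u (1:ℚ)) ∈ facIdeal w := by
  induction c using MonoidAlgebra.induction_linear with
  | zero => simp
  | add f g hf hg => rw [add_mul]; exact add_mem hf hg
  | single v r =>
    rw [MonoidAlgebra.single_mul_single, mul_one]
    have : MonoidAlgebra.single (v * u) r =
        r • MonoidAlgebra.of ℚ (FreeMonoid α) (v * u) := by
      simp [MonoidAlgebra.of_apply, MonoidAlgebra.smul_single']
    rw [this]
    exact Submodule.smul_mem _ _ (Submodule.subset_span (by exact ⟨v * u, notFac_mul_left hu, rfl⟩))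

lemma facIdeal_mul_right {x : MonoidAlgebra ℚ (FreeMonoid α)} (hx : x ∈ facIdeal w)
    (c : MonoidAlgebra ℚ (FreeMonoid α)) : x * c ∈ facIdeal w := by
  induction hx using Submodule.span_induction with
  | mem y hy =>
    obtain ⟨u, hu, rfl⟩ := hy
    exact single_mul_mem u hu c
  | zero => simp
  | add a b _ _ ha hb => rw [add_mul]; exact add_mem ha hb
  | smul r a _ ha => rw [smul_mul_assoc]; exact Submodule.smul_mem _ _ ha

lemma facIdeal_mul_left {x : MonoidAlgebra ℚ (FreeMonoid α)} (hx : x ∈ facIdeal w)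
    (c : MonoidAlgebra ℚ (FreeMonoid α)) : c * x ∈ facIdeal w := by
  induction hx using Submodule.span_induction with
  | mem y hy =>
    obtain ⟨u, hu, rfl⟩ := hy
    exact mul_single_mem u hu c
  | zero => simp
  | add a b _ _ ha hb => rw [mul_add]; exact add_mem ha hb
  | smul r a _ ha => rw [mul_smul_comm]; exact Submodule.smul_mem _ _ ha

lemma rel_sub_mem {x y : MonoidAlgebra ℚ (FreeMonoid α)}
    (h : RingQuot.Rel (FacAlgRel w) x y) : x - y ∈ facIdeal w := by
  induction h with
  | of h =>
    simp only [FacAlgRel] at h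
    obtain ⟨u, hu, rfl, rfl⟩ := h
    have hmem : MonoidAlgebra.of ℚ (FreeMonoid α) u ∈ facIdeal w :=
      Submodule.subset_span (by exact ⟨u, hu, rfl⟩)
    simpa using hmem
  | add_left _ ih => simpa using ih
  | mul_left _ ih => rw [← sub_mul]; exact facIdeal_mul_right ih _
  | mul_right _ ih => rw [← mul_sub]; exact facIdeal_mul_left ih _

variable {M : Type*} [AddCommGroup M] [Module ℚ M]

noncomputable def preT (g : List α → M) : MonoidAlgebra ℚ (FreeMonoid α) →ₗ[ℚ] M :=
  (Finsupp.lsum ℚ (fun u => LinearMap.toSpanSingleton ℚ M (g (FreeMonoid.toList u)))).comp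
    (MonoidAlgebra.coeffLinearEquiv ℚ).toLinearMap

lemma preT_single (g : List α → M) (u : FreeMonoid α) (r : ℚ) :
    preT g (MonoidAlgebra.single u r) = r • g (FreeMonoid.toList u) := by
  rw [preT, LinearMap.comp_apply, LinearEquiv.coe_coe, show MonoidAlgebra.coeffLinearEquiv ℚ (MonoidAlgebra.single u r : MonoidAlgebra ℚ (FreeMonoid α)) = Finsupp.single u r from rfl]
  erw [Finsupp.lsum_single]
  rw [LinearMap.toSpanSingleton_apply]

lemma preT_ideal (g : List α → M) (hg : ∀ u ∉ Fac w, g u = 0)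
    {x : MonoidAlgebra ℚ (FreeMonoid α)} (hx : x ∈ facIdeal w) : preT g x = 0 := by
  induction hx using Submodule.span_induction with
  | mem y hy =>
    obtain ⟨u, hu, rfl⟩ := hy
    rw [MonoidAlgebra.of_apply, preT_single, hg _ hu, smul_zero]
  | zero => simp
  | add a b _ _ ha hb => rw [map_add, ha, hb, add_zero]
  | smul r a _ ha => rw [map_smul, ha, smul_zero]

lemma mk_toQuot (a : MonoidAlgebra ℚ (FreeMonoid α)) :
    (RingQuot.mkAlgHom ℚ (FacAlgRel w) a).toQuot = Quot.mk _ a := by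
  rw [RingQuot.mkAlgHom_def]
  simp only [RingQuot.mkRingHom_def]
  rfl

noncomputable def liftF0 (g : List α → M) (hg : ∀ u ∉ Fac w, g u = 0) : FacAlg w → M :=
  fun x => Quot.lift (fun a => preT g a) (fun a b h => by
    have h1 : preT g (a - b) = 0 := preT_ideal g hg (rel_sub_mem h)
    rw [map_sub, sub_eq_zero] at h1
    exact h1) x.toQuot

lemma liftF0_mk (g : List α → M) (hg : ∀ u ∉ Fac w, g u = 0)
    (a : MonoidAlgebra ℚ (FreeMonoid α)) :
    liftF0 g hg (RingQuot.mkAlgHom ℚ (FacAlgRel w) a) = preT g a := by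
  unfold liftF0
  rw [mk_toQuot]

noncomputable def liftF (g : List α → M) (hg : ∀ u ∉ Fac w, g u = 0) :
    FacAlg w →ₗ[ℚ] M where
  toFun := liftF0 g hg
  map_add' := by
    intro x y
    obtain ⟨a, rfl⟩ := RingQuot.mkAlgHom_surjective ℚ (FacAlgRel w) x
    obtain ⟨b, rfl⟩ := RingQuot.mkAlgHom_surjective ℚ (FacAlgRel w) y
    rw [← map_add, liftF0_mk, liftF0_mk, liftF0_mk, map_add]
  map_smul' := by
    intro r x
    obtain ⟨a, rfl⟩ := RingQuot.mkAlgHom_surjective ℚ (FacAlgRel w) x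
    rw [← map_smul]
    show liftF0 g hg _ = (RingHom.id ℚ) r • liftF0 g hg _
    rw [liftF0_mk, liftF0_mk, map_smul]
    rfl

lemma liftF_facCls (g : List α → M) (hg : ∀ u ∉ Fac w, g u = 0) (u : List α) :
    liftF g hg (facCls w u) = g u := by
  show liftF0 g hg _ = g u
  rw [facCls, liftF0_mk, MonoidAlgebra.of_apply, preT_single]
  simp

lemma facCls_eq_zero {u : List α} (hu : u ∉ Fac w) : facCls w u = 0 := by
  have : FacAlgRel w (MonoidAlgebra.of ℚ (FreeMonoid α) (FreeMonoid.ofList u)) 0 :=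
    ⟨FreeMonoid.ofList u, by simpa using hu, rfl, rfl⟩
  rw [facCls]
  rw [RingQuot.mkAlgHom_rel ℚ this]
  exact map_zero _

lemma facCls_mul (a b : List α) : facCls w a * facCls w b = facCls w (a ++ b) := by
  rw [facCls, facCls, facCls, ← map_mul, ← map_mul]
  congr 1

end Alg

section Comb
variable {w : ℕ → α} {n : ℕ}

def Good (w : ℕ → α) (n : ℕ) (u : List α) : Prop :=
  u.length = n ∧ ∀ v, u.IsRotated v → v ∈ Fac w

lemma Good.mem_fac {u : List α} (h : Good w n u) : u ∈ Fac w :=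
  h.2 u (List.IsRotated.refl u)

lemma Good.rotated {u v : List α} (h : Good w n u) (huv : u.IsRotated v) : Good w n v :=
  ⟨huv.perm.length_eq ▸ h.1, fun x hx => h.2 x (huv.trans hx)⟩

lemma wgen_mem {a b : List α} (ha : a ∈ Fac w) (hb : b ∈ Fac w)
    (hab : a.length + b.length = n) :
    facCls w (a ++ b) - facCls w (b ++ a) ∈ Wspace w n := by
  have : facCls w a * facCls w b - facCls w b * facCls w a ∈ Wspace w n :=
    Submodule.subset_span (by exact ⟨a, ha, b, hb, hab, rfl⟩)
  rwa [facCls_mul, facCls_mul] at this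

lemma telescope {u : List α} (hn : u.length = n) (m : ℕ)
    (hm : ∀ j < m, u.rotate j ∈ Fac w) :
    facCls w u - facCls w (u.rotate m) ∈ Wspace w n := by
  induction m with
  | zero => simp
  | succ m ih =>
    have h1 := ih (fun j hj => hm j (by omega))
    have hfm : u.rotate m ∈ Fac w := hm m (by omega)
    have h2 : facCls w (u.rotate m) - facCls w (u.rotate (m + 1)) ∈ Wspace w n := by
      rcases eq_or_ne u [] with rfl | hne
      · simp
      · obtain ⟨c, t, hct⟩ : ∃ c t, u.rotate m = c :: t := by
          cases h : u.rotate m with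
          | nil => exact absurd (by simpa using congrArg List.length h) hne
          | cons c t => exact ⟨c, t, rfl⟩
        have hrot : u.rotate (m + 1) = t ++ [c] := by
          rw [← List.rotate_rotate, hct, show (1:ℕ) = 0 + 1 from rfl,
            List.rotate_cons_succ, List.rotate_zero]
        have hc : [c] ∈ Fac w := fac_infix ⟨[], t, by simp [hct]⟩ hfm
        have ht : t ∈ Fac w := fac_infix ⟨[c], [], by simp [hct]⟩ hfm
        have hlen : [c].length + t.length = n := by
          have h3 : (u.rotate m).length = n := by rw [List.length_rotate, hn]
          rw [hct, List.length_cons] at h3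
          simp only [List.length_cons, List.length_nil]
          omega
        have hw := wgen_mem hc ht hlen
        rw [show [c] ++ t = c :: t from rfl, ← hct, ← hrot] at hw
        exact hw
    have := add_mem h1 h2
    simpa using this

lemma facCls_mem_W {u : List α} (hu : u ∈ Fac w) (hn : u.length = n)
    {v : List α} (huv : u.IsRotated v) (hv : v ∉ Fac w) :
    facCls w u ∈ Wspace w n := by
  classical
  obtain ⟨m, hm⟩ := huv
  have hex : ∃ k, u.rotate k ∉ Fac w := ⟨m, hm ▸ hv⟩
  let k := Nat.find hex
  have hk : u.rotate k ∉ Fac w := Nat.find_spec hex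
  have hlt : ∀ j < k, u.rotate j ∈ Fac w := by
    intro j hj
    by_contra h
    exact absurd hj (not_lt.mpr (Nat.find_le h))
  have := telescope hn k hlt
  rwa [facCls_eq_zero hk, sub_zero] at this

lemma facCls_sub_mem_W {u v : List α} (hu : Good w n u) (huv : u.IsRotated v) :
    facCls w u - facCls w v ∈ Wspace w n := by
  obtain ⟨m, hm⟩ := huv
  exact hm ▸ telescope hu.1 m (fun j _ => hu.2 _ ((List.IsRotated.forall u j).symm))
end Comb

theorem lie_eq_dim_sub_dim [Fintype α] (w : ℕ → α) (n : ℕ) :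
    LieComplexity w n = Module.finrank ℚ (Vspace w n) - Module.finrank ℚ (Wspace w n) := by
  classical
  set Q := Quotient (List.IsRotated.setoid α) with hQ
  set S : Set Q := {q | ∃ u : List α, Quotient.mk _ u = q ∧ u.length = n ∧
    ∀ v, u.IsRotated v → v ∈ Fac w} with hS
  -- finiteness of length-n lists
  have hlistfin : {u : List α | u.length = n}.Finite := by
    apply Set.Finite.subset (Set.finite_range (fun f : Fin n → α => List.ofFn f))
    intro l hl
    refine ⟨fun i => l.get (Fin.cast hl.symm i), ?_⟩
    simp only [Set.mem_setOf_eq] at hl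
    subst hl
    simp [List.ofFn_get]
  have hSfin : S.Finite := by
    apply Set.Finite.subset (hlistfin.image (fun u => Quotient.mk (List.IsRotated.setoid α) u))
    rintro q ⟨u, rfl, hlen, -⟩
    exact ⟨u, hlen, rfl⟩
  -- V is finite dimensional
  have hVfin : FiniteDimensional ℚ (Vspace w n) := by
    apply FiniteDimensional.span_of_finite
    apply Set.Finite.subset (hlistfin.image (facCls w))
    rintro x ⟨u, -, hlen, rfl⟩
    exact ⟨u, hlen, rfl⟩
  -- W ≤ V
  have hWV : Wspace w n ≤ Vspace w n := by
    rw [Wspace, Submodule.span_le]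
    rintro x ⟨a, ha, b, hb, hab, rfl⟩
    rw [facCls_mul, facCls_mul]
    have hmem : ∀ c : List α, c.length = n → facCls w c ∈ Vspace w n := by
      intro c hc
      by_cases hcf : c ∈ Fac w
      · exact Submodule.subset_span (by exact ⟨c, hcf, hc, rfl⟩)
      · rw [facCls_eq_zero hcf]; exact zero_mem _
    exact sub_mem (hmem _ (by simp; omega)) (hmem _ (by simp; omega))
  -- the quotient map setup
  set φ : Vspace w n →ₗ[ℚ] (FacAlg w ⧸ Wspace w n) :=
    (Wspace w n).mkQ.comp (Vspace w n).subtype with hφ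
  have hker : LinearMap.ker φ = (Wspace w n).comap (Vspace w n).subtype := by
    rw [hφ, LinearMap.ker_comp, Submodule.ker_mkQ]
  have hrk : Module.finrank ℚ (LinearMap.range φ) + Module.finrank ℚ (Wspace w n)
      = Module.finrank ℚ (Vspace w n) := by
    have := LinearMap.finrank_range_add_finrank_ker (K := ℚ)
      (V := ↥(Vspace w n)) (V₂ := FacAlg w ⧸ Wspace w n) φ
    rwa [hker, (Submodule.comapSubtypeEquivOfLe hWV).finrank_eq] at this
  -- range φ = image of V
  have hrange : LinearMap.range φ = (Vspace w n).map (Wspace w n).mkQ := by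
    rw [hφ, LinearMap.range_comp, Submodule.range_subtype]
  -- the embedding of good classes
  set emb : Q → (FacAlg w ⧸ Wspace w n) :=
    fun q => (Wspace w n).mkQ (facCls w q.out) with hemb
  -- good representatives
  have hgoodS : ∀ q ∈ S, Good w n q.out := by
    rintro q ⟨u, rfl, hlen, hrot⟩
    have : u.IsRotated (Quotient.mk (List.IsRotated.setoid α) u).out :=
      Quotient.exact (Quotient.out_eq (Quotient.mk (List.IsRotated.setoid α) u)).symm
    exact Good.rotated ⟨hlen, hrot⟩ this
  -- upper bound
  have hupper : Module.finrank ℚ (LinearMap.range φ) ≤ S.ncard := by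
    have hsub : LinearMap.range φ ≤ Submodule.span ℚ (emb '' S) := by
      rw [hrange, Vspace, Submodule.map_span, Submodule.span_le]
      rintro x ⟨y, ⟨u, hu, hlen, rfl⟩, rfl⟩
      by_cases hG : ∀ v, u.IsRotated v → v ∈ Fac w
      · -- good
        have hq : Quotient.mk (List.IsRotated.setoid α) u ∈ S := ⟨u, rfl, hlen, hG⟩
        have hout : Good w n (Quotient.mk (List.IsRotated.setoid α) u).out :=
          hgoodS _ hq
        have hur : u.IsRotated (Quotient.mk (List.IsRotated.setoid α) u).out :=
          Quotient.exact (Quotient.out_eq (Quotient.mk (List.IsRotated.setoid α) u)).symm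
        have hdiff := facCls_sub_mem_W (n := n) ⟨hlen, hG⟩ hur
        have : (Wspace w n).mkQ (facCls w u) = emb (Quotient.mk (List.IsRotated.setoid α) u) := by
          rw [hemb]
          rw [← sub_eq_zero, ← map_sub, Submodule.mkQ_apply, Submodule.Quotient.mk_eq_zero]
          exact hdiff
        rw [this]
        exact Submodule.subset_span ⟨_, hq, rfl⟩
      · -- not good
        push_neg at hG
        obtain ⟨v, huv, hv⟩ := hG
        have : facCls w u ∈ Wspace w n := facCls_mem_W hu hlen huv hv
        have : (Wspace w n).mkQ (facCls w u) = 0 := by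
          rwa [Submodule.mkQ_apply, Submodule.Quotient.mk_eq_zero]
        rw [this]
        exact zero_mem _
    have hfin : (emb '' S).Finite := hSfin.image _
    haveI : Fintype (emb '' S) := hfin.fintype
    calc Module.finrank ℚ (LinearMap.range φ)
        ≤ Module.finrank ℚ (Submodule.span ℚ (emb '' S)) := by
          haveI : FiniteDimensional ℚ (Submodule.span ℚ (emb '' S)) :=
            FiniteDimensional.span_of_finite ℚ hfin
          exact Submodule.finrank_mono hsub
      _ ≤ (emb '' S).toFinset.card := finrank_span_le_card _
      _ = (emb '' S).ncard := (Set.ncard_eq_toFinset_card' _).symm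
      _ ≤ S.ncard := Set.ncard_image_le hSfin
  -- lower bound
  have hlower : S.ncard ≤ Module.finrank ℚ (LinearMap.range φ) := by
    set g : List α → (Q →₀ ℚ) := fun u =>
      if u.length = n ∧ ∀ v, u.IsRotated v → v ∈ Fac w
      then Finsupp.single (Quotient.mk (List.IsRotated.setoid α) u) (1:ℚ) else 0 with hg
    have hg0 : ∀ u ∉ Fac w, g u = 0 := by
      intro u hu
      rw [hg]
      simp only [ite_eq_right_iff]
      rintro ⟨-, h⟩
      exact absurd (h u (List.IsRotated.refl u)) hu
    have hginv : ∀ u v : List α, u.IsRotated v → g u = g v := by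
      intro u v huv
      rw [hg]
      by_cases hGu : u.length = n ∧ ∀ x, u.IsRotated x → x ∈ Fac w
      · have hGv : v.length = n ∧ ∀ x, v.IsRotated x → x ∈ Fac w := by
          constructor
          · rw [← huv.perm.length_eq]; exact hGu.1
          · exact fun x hx => hGu.2 x (huv.trans hx)
        simp only [if_pos hGu, if_pos hGv]
        congr 1
        exact Quotient.sound huv
      · have hGv : ¬ (v.length = n ∧ ∀ x, v.IsRotated x → x ∈ Fac w) := by
          intro h
          exact hGu ⟨huv.perm.length_eq ▸ h.1, fun x hx => h.2 x (huv.symm.trans hx)⟩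
        simp only [if_neg hGu, if_neg hGv]
    set T : FacAlg w →ₗ[ℚ] (Q →₀ ℚ) := liftF g hg0 with hT
    have hTW : Wspace w n ≤ LinearMap.ker T := by
      rw [Wspace, Submodule.span_le]
      rintro x ⟨a, ha, b, hb, hab, rfl⟩
      rw [facCls_mul, facCls_mul]
      simp only [SetLike.mem_coe, LinearMap.mem_ker, map_sub, hT,
        liftF_facCls]
      rw [hginv (a ++ b) (b ++ a) List.isRotated_append, sub_self]
    set T2 : (FacAlg w ⧸ Wspace w n) →ₗ[ℚ] (Q →₀ ℚ) := Submodule.liftQ _ T hTW with hT2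
    -- singles over S land in T2 image of range φ
    have hsingle_mem : ∀ q ∈ S, Finsupp.single q (1:ℚ) ∈
        (LinearMap.range φ).map T2 := by
      intro q hq
      have hout := hgoodS q hq
      have hfac : facCls w q.out ∈ Vspace w n :=
        Submodule.subset_span (by exact ⟨q.out, hout.mem_fac, hout.1, rfl⟩)
      refine ⟨φ ⟨facCls w q.out, hfac⟩, ⟨_, rfl⟩, ?_⟩
      rw [hφ]
      simp only [LinearMap.comp_apply, Submodule.subtype_apply, Submodule.mkQ_apply]
      rw [hT2, Submodule.liftQ_apply, hT, liftF_facCls]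
      simp only [hg]
      rw [if_pos ⟨hout.1, hout.2⟩, Quotient.out_eq]
    haveI : Fintype S := hSfin.fintype
    have hindep : LinearIndependent ℚ (fun q : S => Finsupp.single (q : Q) (1:ℚ)) := by
      have := (Finsupp.basisSingleOne (R := ℚ) (ι := Q)).linearIndependent
      exact this.comp Subtype.val Subtype.val_injective
    have hspan_le : Submodule.span ℚ (Set.range (fun q : S => Finsupp.single (q : Q) (1:ℚ)))
        ≤ (LinearMap.range φ).map T2 := by
      rw [Submodule.span_le]
      rintro x ⟨q, rfl⟩
      exact hsingle_mem q q.2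
    have hcard : Module.finrank ℚ (Submodule.span ℚ
        (Set.range (fun q : S => Finsupp.single (q : Q) (1:ℚ)))) = S.ncard := by
      rw [finrank_span_eq_card hindep]
      rw [← Nat.card_coe_set_eq, Nat.card_eq_fintype_card]
    haveI : FiniteDimensional ℚ (LinearMap.range φ) := by
      rw [hrange]
      exact Module.Finite.map _ _
    calc S.ncard = Module.finrank ℚ (Submodule.span ℚ
          (Set.range (fun q : S => Finsupp.single (q : Q) (1:ℚ)))) := hcard.symm
      _ ≤ Module.finrank ℚ ((LinearMap.range φ).map T2) := by
          haveI : FiniteDimensional ℚ ((LinearMap.range φ).map T2) :=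
            Module.Finite.map _ _
          exact Submodule.finrank_mono hspan_le
      _ ≤ Module.finrank ℚ (LinearMap.range φ) := Submodule.finrank_map_le _ _
  have hmain : Module.finrank ℚ (LinearMap.range φ) = S.ncard := le_antisymm hupper hlower
  have : LieComplexity w n = S.ncard := rfl
  omega
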